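/- Let F be an affine hyperplane of ℝⁿ, (vᵖ) a sequence of vectors not in the direction of F converging to a vector v not in the direction of F, and (νᵖ) a sequence of finite Borel measures on ℝⁿ, all supported in a fixed compact set, converging weakly to ν. Then the pushforwards (π_{F,vᵖ})_#νᵖ restricted to F + ℝ₊vᵖ converge weakly to (π_{F,v})_#ν, where π_{F,u} : F + ℝ₊u → F maps x + tu to x for x ∈ F, t ≥ 0. -/

import Mathlib

open MeasureTheory Filter Topology

namespace ProjMeasAux

/-- Build a bounded continuous function from a continuous function with values in `[0,1]`. -/
noncomputable def bcfOf {n : ℕ} (u : C(Fin n → ℝ, ℝ)) (h0 : ∀ x, 0 ≤ u x)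
    (h1 : ∀ x, u x ≤ 1) : BoundedContinuousFunction (Fin n → ℝ) ℝ :=
  BoundedContinuousFunction.mkOfBound u 1 (fun x y => by
    rw [Real.dist_eq, abs_sub_le_iff]
    constructor <;> nlinarith [h0 x, h0 y, h1 x, h1 y])

@[simp] lemma bcfOf_apply {n : ℕ} (u : C(Fin n → ℝ, ℝ)) (h0 : ∀ x, 0 ≤ u x)
    (h1 : ∀ x, u x ≤ 1) (y : Fin n → ℝ) : bcfOf u h0 h1 y = u y := rfl

/-- Key portmanteau-type step: convergence of integrals over the half-space `{0 ≤ f}`,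
using that `ν` gives no mass to the boundary `{f = 0}`. -/
lemma aux_main (n : ℕ) (f : (Fin n → ℝ) →ᵃ[ℝ] ℝ)
    (ν : Measure (Fin n → ℝ)) [IsFiniteMeasure ν]
    (νp : ℕ → Measure (Fin n → ℝ)) (hfin : ∀ p, IsFiniteMeasure (νp p))
    (hν0 : ν {x | f x = 0} = 0)
    (hconv : ∀ φ : BoundedContinuousFunction (Fin n → ℝ) ℝ,
      Tendsto (fun p => ∫ x, φ x ∂(νp p)) atTop (nhds (∫ x, φ x ∂ν)))
    (ψ : BoundedContinuousFunction (Fin n → ℝ) ℝ) :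
    Tendsto (fun p => ∫ y in {y | 0 ≤ f y}, ψ y ∂(νp p)) atTop
      (𝓝 (∫ y in {y | 0 ≤ f y}, ψ y ∂ν)) := by
  have hfc : Continuous f := f.continuous_of_finiteDimensional
  have hH : MeasurableSet {y : Fin n → ℝ | 0 ≤ f y} :=
    (isClosed_le continuous_const hfc).measurableSet
  set Cφ := ‖ψ‖ with hCφdef
  have hCφ : 0 ≤ Cφ := norm_nonneg _
  have hψle : ∀ y, |ψ y| ≤ Cφ := by
    intro y
    simpa [Real.norm_eq_abs] using ψ.norm_coe_le_norm y
  rw [Metric.tendsto_nhds]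
  intro δ hδ
  set η := δ / (3 * Cφ + 2) with hηdef
  have hηpos : 0 < η := by positivity
  -- find a small strip around {f = 0} of ν-measure < η
  set s : ℕ → Set (Fin n → ℝ) := fun k =>
    {y | -(2 * (1 / (k + 1 : ℝ))) ≤ f y ∧ f y ≤ 1 / (k + 1 : ℝ)} with hsdef
  have hsmeas : ∀ k, MeasurableSet (s k) := by
    intro k
    have : s k = f ⁻¹' (Set.Icc (-(2 * (1 / (k + 1 : ℝ)))) (1 / (k + 1 : ℝ))) := by
      ext y; simp [hsdef, Set.mem_Icc]
    rw [this]
    exact (isClosed_Icc.preimage hfc).measurableSet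
  have hanti : Antitone s := by
    intro k m hkm y hy
    have hk1 : (0:ℝ) < k + 1 := by positivity
    have hm1 : (0:ℝ) < m + 1 := by positivity
    have hle : (1 : ℝ) / (m + 1) ≤ 1 / (k + 1) := by
      apply one_div_le_one_div_of_le hk1
      exact_mod_cast by exact_mod_cast add_le_add_left (Nat.cast_le.2 hkm) 1
    exact ⟨le_trans (by linarith) hy.1, le_trans hy.2 hle⟩
  have hInter : (⋂ k, s k) ⊆ {x | f x = 0} := by
    intro y hy
    simp only [Set.mem_iInter] at hy
    simp only [Set.mem_setOf_eq]
    by_contra hne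
    rcases lt_or_gt_of_ne hne with hlt | hgt
    · obtain ⟨k, hk⟩ := exists_nat_one_div_lt (show (0:ℝ) < -(f y) / 2 by linarith)
      have := (hy k).1
      have hk' : (1:ℝ) / (k + 1) < -(f y) / 2 := hk
      linarith
    · obtain ⟨k, hk⟩ := exists_nat_one_div_lt hgt
      have := (hy k).2
      linarith
  have htend : Tendsto (fun k => ν (s k)) atTop (𝓝 0) := by
    have h1 := tendsto_measure_iInter_atTop (μ := ν)
      (fun k => (hsmeas k).nullMeasurableSet) hanti ⟨0, measure_ne_top ν _⟩
    have h2 : ν (⋂ k, s k) = 0 :=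
      le_antisymm (le_trans (measure_mono hInter) (le_of_eq hν0)) (zero_le)
    rw [h2] at h1
    exact h1
  obtain ⟨k, hk⟩ : ∃ k, (ν (s k)).toReal < η := by
    have := (ENNReal.tendsto_toReal ENNReal.zero_ne_top).comp htend
    simp only [ENNReal.toReal_zero] at this
    obtain ⟨k, hk⟩ := (Metric.tendsto_atTop.1 this η hηpos) 
    refine ⟨k, ?_⟩
    have := hk k le_rfl
    simp only [Function.comp, Real.dist_eq, sub_zero] at this
    rwa [abs_of_nonneg ENNReal.toReal_nonneg] at this
  set ε := (1 : ℝ) / (k + 1) with hεdef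
  have hε : 0 < ε := by positivity
  -- the cutoff functions
  set χ : BoundedContinuousFunction (Fin n → ℝ) ℝ :=
    bcfOf ⟨fun y => min 1 (max 0 (f y / ε + 1)), by fun_prop⟩
      (fun x => le_min zero_le_one (le_max_left 0 _))
      (fun x => min_le_left _ _) with hχdef
  set θ : BoundedContinuousFunction (Fin n → ℝ) ℝ :=
    bcfOf ⟨fun y => min 1 (min (max 0 ((f y + 2 * ε) / ε)) (max 0 ((ε - f y) / ε))),
        by fun_prop⟩
      (fun x => le_min zero_le_one (le_min (le_max_left 0 _) (le_max_left 0 _)))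
      (fun x => min_le_left _ _) with hθdef
  have hχ01 : ∀ y, 0 ≤ χ y ∧ χ y ≤ 1 := fun y =>
    ⟨le_min zero_le_one (le_max_left 0 _), min_le_left _ _⟩
  have hθ01 : ∀ y, 0 ≤ θ y ∧ θ y ≤ 1 := fun y =>
    ⟨le_min zero_le_one (le_min (le_max_left 0 _) (le_max_left 0 _)), min_le_left _ _⟩
  set S : Set (Fin n → ℝ) := {y | -ε < f y ∧ f y < 0} with hSdef
  have hS : MeasurableSet S := by
    have : S = f ⁻¹' (Set.Ioo (-ε) 0) := by ext y; simp [hSdef, Set.mem_Ioo]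
    rw [this]
    exact (isOpen_Ioo.preimage hfc).measurableSet
  have hSsub : S ⊆ s k := by
    intro y hy
    exact ⟨by rw [← hεdef]; linarith [hy.1], by rw [← hεdef]; linarith [hy.2]⟩
  -- pointwise estimate  |1_H ψ - ψ χ| ≤ Cφ 1_S
  have hpt : ∀ y, |Set.indicator {y | 0 ≤ f y} (⇑ψ) y - ψ y * χ y| ≤
      Set.indicator S (fun _ => Cφ) y := by
    intro y
    have hχy : χ y = min 1 (max 0 (f y / ε + 1)) := rfl
    by_cases hy : 0 ≤ f y
    · have h1 : (1:ℝ) ≤ f y / ε + 1 := by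
        have := div_nonneg hy hε.le; linarith
      have : χ y = 1 := by
        rw [hχy, max_eq_right (by linarith), min_eq_left h1]
      rw [Set.indicator_of_mem (show y ∈ {y | 0 ≤ f y} from hy), this, mul_one, sub_self,
        abs_zero]
      exact Set.indicator_nonneg (fun _ _ => hCφ) y
    · push_neg at hy
      rw [Set.indicator_of_notMem (show y ∉ {y | 0 ≤ f y} from not_le.2 hy), zero_sub,
        abs_neg, abs_mul]
      by_cases hy2 : -ε < f y
      · rw [Set.indicator_of_mem (show y ∈ S from ⟨hy2, hy⟩)]
        calc |ψ y| * |χ y| ≤ Cφ * 1 := by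
              apply mul_le_mul (hψle y) _ (abs_nonneg _) hCφ
              rw [abs_of_nonneg (hχ01 y).1]; exact (hχ01 y).2
          _ = Cφ := mul_one _
      · push_neg at hy2
        have : χ y = 0 := by
          rw [hχy, max_eq_left, min_eq_right zero_le_one]
          have : f y / ε ≤ -1 := by
            rw [div_le_iff₀ hε]; linarith
          linarith
        rw [this, abs_zero, mul_zero]
        exact Set.indicator_nonneg (fun _ _ => hCφ) y
  -- integral estimates for any finite measure
  have key : ∀ (μ : Measure (Fin n → ℝ)), IsFiniteMeasure μ →
      |∫ y in {y | 0 ≤ f y}, ψ y ∂μ - ∫ y, ψ y * χ y ∂μ| ≤ Cφ * (μ S).toReal := by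
    intro μ hμ
    haveI := hμ
    have hint1 : Integrable (Set.indicator {y | 0 ≤ f y} (⇑ψ)) μ :=
      (ψ.integrable μ).indicator hH
    have hint2 : Integrable (fun y => ψ y * χ y) μ := by
      have := (ψ * χ).integrable μ
      exact this
    rw [← integral_indicator hH, ← integral_sub hint1 hint2]
    calc |∫ y, (Set.indicator {y | 0 ≤ f y} (⇑ψ) y - ψ y * χ y) ∂μ|
        ≤ ∫ y, |Set.indicator {y | 0 ≤ f y} (⇑ψ) y - ψ y * χ y| ∂μ := by
          simpa [Real.norm_eq_abs] using norm_integral_le_integral_norm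
            (fun y => Set.indicator {y | 0 ≤ f y} (⇑ψ) y - ψ y * χ y) (μ := μ)
      _ ≤ ∫ y, Set.indicator S (fun _ => Cφ) y ∂μ := by
          apply integral_mono ((hint1.sub hint2).abs) ((integrable_const Cφ).indicator hS) hpt
      _ = Cφ * (μ S).toReal := by
          rw [integral_indicator_const _ hS, smul_eq_mul, mul_comm, measureReal_def]
  have keyS : ∀ (μ : Measure (Fin n → ℝ)), IsFiniteMeasure μ →
      (μ S).toReal ≤ ∫ y, θ y ∂μ := by
    intro μ hμ
    haveI := hμ
    have : (μ S).toReal = ∫ y, Set.indicator S (fun _ => (1:ℝ)) y ∂μ := by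
      rw [integral_indicator_const _ hS, smul_eq_mul, mul_one, measureReal_def]
    rw [this]
    apply integral_mono ((integrable_const (1:ℝ)).indicator hS) (θ.integrable μ)
    intro y
    by_cases hy : y ∈ S
    · rw [Set.indicator_of_mem hy]
      apply le_min le_rfl (le_min _ _)
      · apply le_trans _ (le_max_right 0 _)
        rw [le_div_iff₀ hε]; linarith [hy.1]
      · apply le_trans _ (le_max_right 0 _)
        rw [le_div_iff₀ hε]; linarith [hy.2]
    · rw [Set.indicator_of_notMem hy]
      exact (hθ01 y).1
  have keyT : ∫ y, θ y ∂ν ≤ (ν (s k)).toReal := by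
    have : (ν (s k)).toReal = ∫ y, Set.indicator (s k) (fun _ => (1:ℝ)) y ∂ν := by
      rw [integral_indicator_const _ (hsmeas k), smul_eq_mul, mul_one, measureReal_def]
    rw [this]
    apply integral_mono (θ.integrable ν) ((integrable_const (1:ℝ)).indicator (hsmeas k))
    intro y
    by_cases hy : y ∈ s k
    · rw [Set.indicator_of_mem hy]
      exact (hθ01 y).2
    · rw [Set.indicator_of_notMem hy]
      simp only [hsdef, Set.mem_setOf_eq, not_and, not_le] at hy
      show min 1 (min (max 0 ((f y + 2 * ε) / ε)) (max 0 ((ε - f y) / ε))) ≤ 0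
      by_cases hy1 : -(2 * ε) ≤ f y
      · have h2 : 1 / (k + 1 : ℝ) < f y := hy (by linarith)
        have : (ε - f y) / ε ≤ 0 := by
          apply div_nonpos_of_nonpos_of_nonneg _ hε.le
          linarith
        calc min 1 (min (max 0 ((f y + 2 * ε) / ε)) (max 0 ((ε - f y) / ε)))
            ≤ max 0 ((ε - f y) / ε) := le_trans (min_le_right _ _) (min_le_right _ _)
          _ ≤ 0 := by rw [max_eq_left this]
      · push_neg at hy1
        have : (f y + 2 * ε) / ε ≤ 0 := by
          apply div_nonpos_of_nonpos_of_nonneg _ hε.le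
          linarith
        calc min 1 (min (max 0 ((f y + 2 * ε) / ε)) (max 0 ((ε - f y) / ε)))
            ≤ max 0 ((f y + 2 * ε) / ε) := le_trans (min_le_right _ _) (min_le_left _ _)
          _ ≤ 0 := by rw [max_eq_left this]
  -- eventual facts
  have hconvχ := hconv (ψ * χ)
  have E1 : ∀ᶠ p in atTop,
      |∫ y, ψ y * χ y ∂(νp p) - ∫ y, ψ y * χ y ∂ν| < η := by
    have := Metric.tendsto_nhds.1 hconvχ η hηpos
    filter_upwards [this] with p hp
    simpa [Real.dist_eq, BoundedContinuousFunction.coe_mul] using hp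
  have E2 : ∀ᶠ p in atTop, ∫ y, θ y ∂(νp p) < ∫ y, θ y ∂ν + η := by
    have := Metric.tendsto_nhds.1 (hconv θ) η hηpos
    filter_upwards [this] with p hp
    rw [Real.dist_eq, abs_sub_lt_iff] at hp
    linarith [hp.1]
  filter_upwards [E1, E2] with p h1 h2
  haveI := hfin p
  have k1 := key (νp p) (hfin p)
  have k2 := key ν inferInstance
  have k3 := keyS (νp p) (hfin p)
  have hνS : (ν S).toReal ≤ (ν (s k)).toReal :=
    ENNReal.toReal_mono (measure_ne_top ν _) (measure_mono hSsub)
  rw [Real.dist_eq]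
  set A := ∫ y in {y | 0 ≤ f y}, ψ y ∂(νp p) with hA
  set B := ∫ y, ψ y * χ y ∂(νp p) with hB
  set Cc := ∫ y, ψ y * χ y ∂ν with hC
  set D := ∫ y in {y | 0 ≤ f y}, ψ y ∂ν with hD
  have tri : |A - D| ≤ |A - B| + |B - Cc| + |Cc - D| := by
    calc |A - D| ≤ |A - B| + |B - D| := abs_sub_le _ _ _
      _ ≤ |A - B| + (|B - Cc| + |Cc - D|) :=
        add_le_add_right (abs_sub_le _ _ _) _
      _ = |A - B| + |B - Cc| + |Cc - D| := by ring
  have k2' : |Cc - D| ≤ Cφ * (ν S).toReal := by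
    rw [abs_sub_comm]; exact k2
  have b1 : ((νp p) S).toReal < 2 * η := by
    have : ∫ y, θ y ∂(νp p) < 2 * η := by linarith [keyT, hk, h2]
    linarith [k3]
  have b2 : (ν S).toReal < η := lt_of_le_of_lt hνS hk
  have hδη : δ = η * (3 * Cφ + 2) := by
    rw [hηdef]; field_simp
  have m1 : Cφ * ((νp p) S).toReal ≤ Cφ * (2 * η) :=
    mul_le_mul_of_nonneg_left b1.le hCφ
  have m2 : Cφ * (ν S).toReal ≤ Cφ * η :=
    mul_le_mul_of_nonneg_left b2.le hCφ
  have hfinal : |A - D| < δ := by nlinarith [tri, k1, h1, k2', m1, m2, hηpos, hCφ]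
  exact hfinal
lemma aux_pos (n : ℕ)
    (f : (Fin n → ℝ) →ᵃ[ℝ] ℝ)
    (v : Fin n → ℝ) (hv : 0 < f.linear v)
    (vp : ℕ → Fin n → ℝ) (hvp : ∀ p, f.linear (vp p) ≠ 0)
    (hvlim : Tendsto vp atTop (nhds v))
    (ν : Measure (Fin n → ℝ)) [IsFiniteMeasure ν]
    (νp : ℕ → Measure (Fin n → ℝ)) (hfin : ∀ p, IsFiniteMeasure (νp p))
    (K : Set (Fin n → ℝ)) (hK : IsCompact K)
    (hsupp : ∀ p, νp p Kᶜ = 0)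
    (hν0 : ν {x | f x = 0} = 0)
    (hconv : ∀ φ : BoundedContinuousFunction (Fin n → ℝ) ℝ,
      Tendsto (fun p => ∫ x, φ x ∂(νp p)) atTop (nhds (∫ x, φ x ∂ν)))
    (φ : BoundedContinuousFunction (Fin n → ℝ) ℝ) :
    Tendsto
      (fun p => ∫ x, φ x ∂(Measure.map (fun y => y - (f y / f.linear (vp p)) • vp p)
        ((νp p).restrict {y | 0 ≤ f y / f.linear (vp p)})))
      atTop
      (𝓝 (∫ x, φ x ∂(Measure.map (fun y => y - (f y / f.linear v) • v)
        (ν.restrict {y | 0 ≤ f y / f.linear v})))) := by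
  have hfc : Continuous f := f.continuous_of_finiteDimensional
  have hflc : Continuous f.linear := f.linear.continuous_of_finiteDimensional
  have hH : MeasurableSet {y : Fin n → ℝ | 0 ≤ f y} :=
    (isClosed_le continuous_const hfc).measurableSet
  -- rewrite map-integrals as set integrals
  have hmap : ∀ (μ : Measure (Fin n → ℝ)) (u : Fin n → ℝ) (c : ℝ) (S : Set (Fin n → ℝ)),
      ∫ x, φ x ∂(Measure.map (fun y => y - (f y / c) • u) (μ.restrict S)) =
      ∫ y in S, φ (y - (f y / c) • u) ∂μ := by
    intro μ u c S
    exact integral_map ((continuous_id.sub ((hfc.div_const c).smul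
      continuous_const)).aemeasurable) φ.continuous.aestronglyMeasurable
  have hsetv : {y : Fin n → ℝ | 0 ≤ f y / f.linear v} = {y | 0 ≤ f y} := by
    ext y
    simp only [Set.mem_setOf_eq]
    rw [le_div_iff₀ hv, zero_mul]
  -- scaled directions
  set w : Fin n → ℝ := (f.linear v)⁻¹ • v with hwdef
  have hcl : Tendsto (fun p => f.linear (vp p)) atTop (𝓝 (f.linear v)) :=
    (hflc.tendsto v).comp hvlim
  have hwlim : Tendsto (fun p => (f.linear (vp p))⁻¹ • vp p) atTop (𝓝 w) :=
    (hcl.inv₀ hv.ne').smul hvlim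
  have hcp : ∀ᶠ p in atTop, 0 < f.linear (vp p) := hcl.eventually (eventually_gt_nhds hv)
  have hrw : ∀ (c : ℝ) (u : Fin n → ℝ) (y : Fin n → ℝ),
      (f y / c) • u = f y • (c⁻¹ • u) := by
    intro c u y
    rw [smul_smul, div_eq_mul_inv]
  -- the limit side
  rw [hmap, hsetv]
  have htarget : ∫ y in {y | 0 ≤ f y}, φ (y - (f y / f.linear v) • v) ∂ν =
      ∫ y in {y | 0 ≤ f y}, φ (y - f y • w) ∂ν := by
    congr 1 with y
    rw [hrw]
  rw [htarget]
  -- reduce to the fixed half-space and varying direction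
  have heq : ∀ᶠ p in atTop,
      (∫ x, φ x ∂(Measure.map (fun y => y - (f y / f.linear (vp p)) • vp p)
        ((νp p).restrict {y | 0 ≤ f y / f.linear (vp p)}))) =
      ∫ y in {y | 0 ≤ f y}, φ (y - f y • ((f.linear (vp p))⁻¹ • vp p)) ∂(νp p) := by
    filter_upwards [hcp] with p hp
    rw [hmap]
    have hset : {y : Fin n → ℝ | 0 ≤ f y / f.linear (vp p)} = {y | 0 ≤ f y} := by
      ext y
      simp only [Set.mem_setOf_eq]
      rw [le_div_iff₀ hp, zero_mul]
    rw [hset]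
    congr 1 with y
    rw [hrw]
  rw [tendsto_congr' heq]
  -- main splitting
  set ψw : BoundedContinuousFunction (Fin n → ℝ) ℝ :=
    φ.compContinuous ⟨fun y => y - f y • w, by fun_prop⟩ with hψwdef
  have hBt : Tendsto (fun p => ∫ y in {y | 0 ≤ f y}, ψw y ∂(νp p)) atTop
      (𝓝 (∫ y in {y | 0 ≤ f y}, ψw y ∂ν)) :=
    aux_main n f ν νp hfin hν0 hconv ψw
  have hψw_apply : ∀ y, ψw y = φ (y - f y • w) := fun y => rfl
  have hDt : Tendsto (fun p =>
      (∫ y in {y | 0 ≤ f y}, φ (y - f y • ((f.linear (vp p))⁻¹ • vp p)) ∂(νp p)) -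
      (∫ y in {y | 0 ≤ f y}, ψw y ∂(νp p))) atTop (𝓝 0) := by
    rw [NormedAddCommGroup.tendsto_nhds_zero]
    intro ε hε
    -- total mass bound
    have hmass : Tendsto (fun p => ((νp p) Set.univ).toReal) atTop
        (𝓝 ((ν Set.univ).toReal)) := by
      have := hconv 1
      simpa [BoundedContinuousFunction.coe_one, integral_const, smul_eq_mul, measureReal_def] using this
    set C := (ν Set.univ).toReal + 1 with hCdef
    have hC : 0 < C := by positivity
    have hmassev : ∀ᶠ p in atTop, ((νp p) Set.univ).toReal ≤ C :=
      hmass.eventually (eventually_le_nhds (lt_add_one _))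
    -- bounds on K
    obtain ⟨r, hr⟩ := hK.isBounded.subset_closedBall 0
    obtain ⟨Bf, hBf⟩ := hK.exists_bound_of_continuousOn hfc.continuousOn
    set B := max 0 (max r Bf) with hBdef
    have hB0 : 0 ≤ B := le_max_left 0 _
    have hBy : ∀ y ∈ K, ‖y‖ ≤ B := by
      intro y hy
      have := hr hy
      rw [Metric.mem_closedBall, dist_zero_right] at this
      exact le_trans this (le_trans (le_max_left r Bf) (le_max_right 0 _))
    have hBfy : ∀ y ∈ K, |f y| ≤ B := by
      intro y hy
      have := hBf y hy
      rw [Real.norm_eq_abs] at this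
      exact le_trans this (le_trans (le_max_right r Bf) (le_max_right 0 _))
    -- uniform continuity on a large ball
    set R := B + B * (‖w‖ + 1) with hRdef
    have hLcomp : IsCompact (Metric.closedBall (0 : Fin n → ℝ) R) :=
      isCompact_closedBall 0 R
    have hUC := hLcomp.uniformContinuousOn_of_continuous φ.continuous.continuousOn
    obtain ⟨d, hd, hdp⟩ := Metric.uniformContinuousOn_iff.1 hUC (ε / (2 * C))
      (by positivity)
    have hwev : ∀ᶠ p in atTop,
        ‖(f.linear (vp p))⁻¹ • vp p - w‖ < min (d / (B + 1)) 1 := by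
      have h0 : Tendsto (fun p => ‖(f.linear (vp p))⁻¹ • vp p - w‖) atTop (𝓝 0) :=
        tendsto_iff_norm_sub_tendsto_zero.1 hwlim
      exact h0.eventually (eventually_lt_nhds (lt_min (by positivity) one_pos))
    filter_upwards [hwev, hmassev] with p hw1 hm1
    haveI := hfin p
    set u := (f.linear (vp p))⁻¹ • vp p with hudef
    have hw1' : ‖u - w‖ < d / (B + 1) := lt_of_lt_of_le hw1 (min_le_left _ _)
    have hw1'' : ‖u - w‖ ≤ 1 := le_of_lt (lt_of_lt_of_le hw1 (min_le_right _ _))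
    have hint : ∀ (z : Fin n → ℝ), Integrable (fun y => φ (y - f y • z))
        ((νp p).restrict {y | 0 ≤ f y}) :=
      fun z => (φ.compContinuous
        (⟨fun y => y - f y • z, by fun_prop⟩ : C(Fin n → ℝ, Fin n → ℝ))).integrable _
    have hsub : (∫ y in {y | 0 ≤ f y}, φ (y - f y • u) ∂(νp p)) -
        (∫ y in {y | 0 ≤ f y}, ψw y ∂(νp p)) =
        ∫ y in {y | 0 ≤ f y}, (φ (y - f y • u) - φ (y - f y • w)) ∂(νp p) := by
      rw [integral_sub (hint u) (hint w)]
      simp only [hψw_apply]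
    rw [hsub]
    have haeK : ∀ᵐ y ∂((νp p).restrict {y | 0 ≤ f y}), y ∈ K := by
      apply ae_restrict_of_ae
      rw [MeasureTheory.ae_iff]
      simpa [Set.compl_def] using hsupp p
    have hbound : ∀ᵐ y ∂((νp p).restrict {y | 0 ≤ f y}),
        ‖φ (y - f y • u) - φ (y - f y • w)‖ ≤ ε / (2 * C) := by
      filter_upwards [haeK] with y hyK
      have hyB := hBy y hyK
      have hfyB := hBfy y hyK
      have hu : ‖u‖ ≤ ‖w‖ + 1 := by
        calc ‖u‖ = ‖w + (u - w)‖ := by congr 1; abel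
          _ ≤ ‖w‖ + ‖u - w‖ := norm_add_le _ _
          _ ≤ ‖w‖ + 1 := by linarith
      have hx1 : y - f y • u ∈ Metric.closedBall (0 : Fin n → ℝ) R := by
        rw [Metric.mem_closedBall, dist_zero_right]
        calc ‖y - f y • u‖ ≤ ‖y‖ + ‖f y • u‖ := norm_sub_le _ _
          _ = ‖y‖ + |f y| * ‖u‖ := by rw [norm_smul, Real.norm_eq_abs]
          _ ≤ B + B * (‖w‖ + 1) := by
              refine add_le_add hyB ?_
              exact mul_le_mul hfyB hu (norm_nonneg _) hB0
      have hx2 : y - f y • w ∈ Metric.closedBall (0 : Fin n → ℝ) R := by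
        rw [Metric.mem_closedBall, dist_zero_right]
        calc ‖y - f y • w‖ ≤ ‖y‖ + ‖f y • w‖ := norm_sub_le _ _
          _ = ‖y‖ + |f y| * ‖w‖ := by rw [norm_smul, Real.norm_eq_abs]
          _ ≤ B + B * (‖w‖ + 1) := by
              refine add_le_add hyB ?_
              refine mul_le_mul hfyB (by linarith) (norm_nonneg _) hB0
      have hdist : dist (y - f y • u) (y - f y • w) < d := by
        rw [dist_eq_norm]
        have : (y - f y • u) - (y - f y • w) = f y • (w - u) := by
          rw [smul_sub]; abel
        rw [this, norm_smul, Real.norm_eq_abs, norm_sub_rev]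
        calc |f y| * ‖u - w‖ ≤ B * ‖u - w‖ :=
              mul_le_mul_of_nonneg_right hfyB (norm_nonneg _)
          _ < d := by
              have h1 : B * ‖u - w‖ ≤ B * (d / (B + 1)) :=
                mul_le_mul_of_nonneg_left hw1'.le hB0
              have h2 : B * (d / (B + 1)) < d := by
                rw [mul_div_assoc']
                rw [div_lt_iff₀ (by linarith)]
                nlinarith
              linarith
      have := hdp _ hx1 _ hx2 hdist
      rw [dist_eq_norm] at this
      exact this.le
    calc ‖∫ y in {y | 0 ≤ f y}, (φ (y - f y • u) - φ (y - f y • w)) ∂(νp p)‖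
        ≤ (ε / (2 * C)) * (((νp p).restrict {y | 0 ≤ f y}) Set.univ).toReal :=
          norm_integral_le_of_norm_le_const hbound
      _ ≤ (ε / (2 * C)) * C := by
          refine mul_le_mul_of_nonneg_left ?_ (by positivity)
          refine le_trans ?_ hm1
          refine ENNReal.toReal_mono (measure_ne_top _ _) ?_
          rw [Measure.restrict_apply_univ]
          exact measure_mono (Set.subset_univ _)
      _ < ε := by
          have hCne : C ≠ 0 := hC.ne'
          have heqc : ε / (2 * C) * C = ε / 2 := by field_simp
          rw [heqc]; linarith
  have := hDt.add hBt
  rw [zero_add] at this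
  refine this.congr ?_
  intro p
  simp only [hψw_apply]
  ring

end ProjMeasAux

/-- Continuity of the projected measures: let `F = {x : f x = 0}` be an
affine hyperplane of `ℝⁿ`, `vᵖ → v` vectors transversal to `F`, and `νᵖ → ν` weakly, all
supported in a fixed compact set, with `ν` vanishing on affine hyperplanes.  Then the
pushforwards under `π_{F,u}(y) = y - (f y / f⃗ u) • u` of the restrictions to the half-space
`F + ℝ₊u = {y : f y / f⃗ u ≥ 0}` converge weakly: `(π_{F,vᵖ})_#(νᵖ|_{F+ℝ₊vᵖ}) →
(π_{F,v})_#(ν|_{F+ℝ₊v})`. -/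
theorem projected_measures_weak_convergence (n : ℕ)
    (f : (Fin n → ℝ) →ᵃ[ℝ] ℝ) (hf : f.linear ≠ 0)
    (v : Fin n → ℝ) (hv : f.linear v ≠ 0)
    (vp : ℕ → Fin n → ℝ) (hvp : ∀ p, f.linear (vp p) ≠ 0)
    (hvlim : Tendsto vp atTop (nhds v))
    (ν : Measure (Fin n → ℝ)) [IsFiniteMeasure ν]
    (νp : ℕ → Measure (Fin n → ℝ)) (hfin : ∀ p, IsFiniteMeasure (νp p))
    (K : Set (Fin n → ℝ)) (hK : IsCompact K)
    (hsupp : ν Kᶜ = 0 ∧ ∀ p, νp p Kᶜ = 0)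
    (hν : ∀ g : (Fin n → ℝ) →ᵃ[ℝ] ℝ, g.linear ≠ 0 → ν {x | g x = 0} = 0)
    (hconv : ∀ φ : BoundedContinuousFunction (Fin n → ℝ) ℝ,
      Tendsto (fun p => ∫ x, φ x ∂(νp p)) atTop (nhds (∫ x, φ x ∂ν))) :
    ∀ φ : BoundedContinuousFunction (Fin n → ℝ) ℝ,
      Tendsto
        (fun p => ∫ x, φ x ∂(Measure.map
          (fun y => y - (f y / f.linear (vp p)) • vp p)
          ((νp p).restrict {y | 0 ≤ f y / f.linear (vp p)})))
        atTop
        (nhds (∫ x, φ x ∂(Measure.map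
          (fun y => y - (f y / f.linear v) • v)
          (ν.restrict {y | 0 ≤ f y / f.linear v})))) := by
  intro φ
  have hν0 : ν {x | f x = 0} = 0 := hν f hf
  rcases lt_or_gt_of_ne hv with hneg | hpos
  · -- negative case: apply the positive case to `-f`
    have hlin : (-f).linear = -f.linear := AffineMap.neg_linear f
    have hvpos : 0 < (-f).linear v := by
      rw [hlin]; simpa using hneg
    have hvp' : ∀ p, (-f).linear (vp p) ≠ 0 := by
      intro p
      rw [hlin]
      simpa using hvp p
    have hν0' : ν {x | (-f) x = 0} = 0 := by
      have : {x : Fin n → ℝ | (-f) x = 0} = {x | f x = 0} := by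
        ext x
        simp [AffineMap.coe_neg, neg_eq_zero]
      rw [this]; exact hν0
    have key := ProjMeasAux.aux_pos n (-f) v hvpos vp hvp' hvlim ν νp hfin K hK
      hsupp.2 hν0' hconv φ
    have e1 : ∀ (u : Fin n → ℝ),
        (fun y => y - ((-f) y / (-f).linear u) • u) =
        (fun y => y - (f y / f.linear u) • u) := by
      intro u
      funext y
      rw [show (-f) y = -(f y) by simp [AffineMap.coe_neg], hlin]
      simp [neg_div_neg_eq]
    have e2 : ∀ (u : Fin n → ℝ),
        {y | 0 ≤ (-f) y / (-f).linear u} = {y | 0 ≤ f y / f.linear u} := by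
      intro u
      ext y
      rw [Set.mem_setOf_eq, Set.mem_setOf_eq,
        show (-f) y = -(f y) by simp [AffineMap.coe_neg], hlin]
      simp [neg_div_neg_eq]
    simp only [e1, e2] at key
    exact key
  · exact ProjMeasAux.aux_pos n f v hpos vp hvp hvlim ν νp hfin K hK
      hsupp.2 hν0 hconv φ
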